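/- Let S and Q be periodic sequences in ℝ, each with an m-point motif and a minimal period (l for S, l' for Q). Then there exists t ∈ ℝ with Q = {x + t : x ∈ S} if and only if there exists s ∈ ZMod m such that D(Q)_i = D(S)_{i+s} for all i (indices mod m). In other words, the distance list considered up to cyclic permutation (equivalently, the lexicographically smallest cyclic rotation SDL^o) is a complete invariant of periodic sequences up to translation. -/

import Mathlib

/-- A periodic sequence in `ℝ` with an `m`-point motif `p` and period `l`:
the set `{p i + l * j : i ∈ Fin m, j ∈ ℤ}` where `0 ≤ p 0 < p 1 < ⋯ < p (m-1) < l`. -/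
structure PSeq (m : ℕ) where
  m_pos : 0 < m
  l : ℝ
  l_pos : 0 < l
  p : Fin m → ℝ
  p_strict : StrictMono p
  p0_nonneg : 0 ≤ p ⟨0, m_pos⟩
  p_lt : ∀ i, p i < l

namespace PSeq

variable {m : ℕ}

/-- The set of points of the periodic sequence. -/
def pts (S : PSeq m) : Set ℝ := {x | ∃ (i : Fin m) (j : ℤ), x = S.p i + S.l * j}

/-- The period is minimal: the same set of points cannot be produced with a smaller period. -/
def IsMinimal (S : PSeq m) : Prop := ∀ (m' : ℕ) (T : PSeq m'), T.pts = S.pts → S.l ≤ T.l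

/-- The distance list `D` of the periodic sequence, indexed by `ZMod m`:
`D i = p (i+1) - p i` for `i < m - 1`, and `D (m-1) = (p 0 + l) - p (m-1)`. -/
noncomputable def D (S : PSeq m) : ZMod m → ℝ := fun i =>
  letI : NeZero m := ⟨S.m_pos.ne'⟩
  if h : i.val + 1 < m then S.p ⟨i.val + 1, h⟩ - S.p ⟨i.val, i.val_lt⟩
  else S.p ⟨0, S.m_pos⟩ + S.l - S.p ⟨i.val, i.val_lt⟩

lemma D_eq (S : PSeq m) (i : ZMod m) {r : ℕ} (hrlt : r < m) (hval : i.val = r) :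
    S.D i = if h : r + 1 < m then S.p ⟨r + 1, h⟩ - S.p ⟨r, hrlt⟩
      else S.p ⟨0, S.m_pos⟩ + S.l - S.p ⟨r, hrlt⟩ := by
  subst hval
  rfl

/-- The integer-indexed enumeration of the points. -/
noncomputable def ext (S : PSeq m) (k : ℤ) : ℝ :=
  S.p ⟨(k % (m : ℤ)).toNat, by
    have h0 : (0:ℤ) < m := Int.natCast_pos.mpr S.m_pos
    have h1 := Int.emod_nonneg k h0.ne'
    have h2 := Int.emod_lt_of_pos k h0
    omega⟩ + S.l * ((k / (m : ℤ) : ℤ) : ℝ)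

lemma ext_eq (S : PSeq m) (q : ℤ) (r : ℕ) (hr : r < m) :
    S.ext ((m : ℤ) * q + r) = S.p ⟨r, hr⟩ + S.l * q := by
  have h0 : (0:ℤ) < m := Int.natCast_pos.mpr S.m_pos
  have hmod : ((m : ℤ) * q + r) % m = r := by
    rw [add_comm, Int.add_mul_emod_self_left, Int.emod_eq_of_lt (by positivity)
      (by exact_mod_cast hr)]
  have hdiv : ((m : ℤ) * q + r) / m = q := by
    rw [add_comm, mul_comm, Int.add_mul_ediv_right _ _ h0.ne',
      Int.ediv_eq_zero_of_lt (by positivity) (by exact_mod_cast hr), zero_add]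
  have h3 : (((m : ℤ) * q + r) % m).toNat = r := by rw [hmod]; exact Int.toNat_natCast r
  unfold ext
  simp only [h3, hdiv]

lemma ext_succ (S : PSeq m) (k : ℤ) :
    S.ext (k + 1) = S.ext k + S.D ((k : ℤ) : ZMod m) := by
  letI : NeZero m := ⟨S.m_pos.ne'⟩
  have h0 : (0:ℤ) < m := Int.natCast_pos.mpr S.m_pos
  set q := k / (m : ℤ) with hq
  set r := (k % (m : ℤ)).toNat with hrdef
  have h1 := Int.emod_nonneg k h0.ne'
  have h2 := Int.emod_lt_of_pos k h0
  have hrlt : r < m := by omega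
  have hrcast : (r : ℤ) = k % m := Int.toNat_of_nonneg h1
  have hk : k = (m : ℤ) * q + r := by rw [hrcast, hq]; exact (Int.mul_ediv_add_emod k m).symm
  have hval : ((k : ZMod m)).val = r := by
    have := ZMod.val_intCast (n := m) k
    omega
  have hextk : S.ext k = S.p ⟨r, hrlt⟩ + S.l * q := by
    conv_lhs => rw [hk]
    exact S.ext_eq q r hrlt
  rw [S.D_eq _ hrlt hval]
  by_cases h : r + 1 < m
  · rw [dif_pos h]
    have hk1 : k + 1 = (m : ℤ) * q + ((r + 1 : ℕ) : ℤ) := by push_cast; omega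
    rw [hk1, S.ext_eq q (r+1) h, hextk]
    push_cast
    ring
  · rw [dif_neg h]
    have hk1 : k + 1 = (m : ℤ) * (q + 1) + ((0 : ℕ) : ℤ) := by
      push_cast [mul_add, mul_one]; omega
    rw [hk1, S.ext_eq (q+1) 0 S.m_pos, hextk]
    push_cast
    ring

lemma D_pos (S : PSeq m) (i : ZMod m) : 0 < S.D i := by
  letI : NeZero m := ⟨S.m_pos.ne'⟩
  unfold D
  by_cases h : i.val + 1 < m
  · rw [dif_pos h]
    have := S.p_strict (show (⟨i.val, i.val_lt⟩ : Fin m) < ⟨i.val + 1, h⟩ from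
      Fin.mk_lt_mk.mpr (Nat.lt_succ_self _))
    linarith
  · rw [dif_neg h]
    have h1 := S.p_lt ⟨i.val, i.val_lt⟩
    have h2 := S.p0_nonneg
    linarith

lemma ext_strictMono (S : PSeq m) : StrictMono S.ext := by
  refine strictMono_int_of_lt_succ fun k => ?_
  rw [S.ext_succ k]
  have := S.D_pos ((k : ℤ) : ZMod m)
  linarith

lemma pts_eq_range (S : PSeq m) : S.pts = Set.range S.ext := by
  ext x
  constructor
  · rintro ⟨i, j, rfl⟩
    refine ⟨(m : ℤ) * j + i.val, ?_⟩
    rw [S.ext_eq j i.val i.isLt]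
  · rintro ⟨k, rfl⟩
    exact ⟨_, k / (m : ℤ), rfl⟩

end PSeq

/-- The cyclic shift `σ_s` acting on vectors indexed by `ZMod n`: `(σ_s v) i = v (i + s)`. -/
def shiftVec {n : ℕ} (s : ZMod n) (v : ZMod n → ℝ) : ZMod n → ℝ := fun i => v (i + s)

/-- The reversal `ρ`: `(ρ v) i = v (m - 1 - i)` (note `m - 1 = -1` in `ZMod m`). -/
def revVec {n : ℕ} (v : ZMod n → ℝ) : ZMod n → ℝ := fun i => v (-1 - i)

/-- A strictly monotone `ℤ → ℝ` map is determined by its range up to index shift. -/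
lemma strictMono_range_shift {f g : ℤ → ℝ} (hf : StrictMono f) (hg : StrictMono g)
    (h : Set.range g = Set.range f) {c : ℤ} (hc : g 0 = f c) :
    ∀ k : ℤ, g k = f (k + c) := by
  have step_up : ∀ k : ℤ, g k = f (k + c) → g (k + 1) = f (k + 1 + c) := by
    intro k hk
    obtain ⟨j, hj⟩ : ∃ j, f j = g (k + 1) := by rw [← Set.mem_range, ← h]; exact Set.mem_range_self _
    obtain ⟨i, hi⟩ : ∃ i, g i = f (k + c + 1) := by rw [← Set.mem_range, h]; exact Set.mem_range_self _
    have hj1 : k + c + 1 ≤ j := by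
      have h5 : f (k + c) < f j := by rw [hj, ← hk]; exact hg (lt_add_one k)
      have := hf.lt_iff_lt.mp h5; omega
    have hi1 : k + 1 ≤ i := by
      have h6 : g k < g i := by rw [hi, hk]; exact hf (lt_add_one _)
      have := hg.lt_iff_lt.mp h6; omega
    have h3 : f (k + c + 1) ≤ f j := hf.monotone hj1
    have h4 : g (k + 1) ≤ g i := hg.monotone hi1
    have heq : g (k + 1) = f (k + c + 1) := by rw [hi] at h4; rw [hj] at h3; linarith
    rw [show k + 1 + c = k + c + 1 by ring]
    exact heq
  have step_down : ∀ k : ℤ, g k = f (k + c) → g (k - 1) = f (k - 1 + c) := by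
    intro k hk
    obtain ⟨j, hj⟩ : ∃ j, f j = g (k - 1) := by rw [← Set.mem_range, ← h]; exact Set.mem_range_self _
    obtain ⟨i, hi⟩ : ∃ i, g i = f (k + c - 1) := by rw [← Set.mem_range, h]; exact Set.mem_range_self _
    have hj1 : j ≤ k + c - 1 := by
      have h5 : f j < f (k + c) := by rw [hj, ← hk]; exact hg (sub_one_lt k)
      have := hf.lt_iff_lt.mp h5; omega
    have hi1 : i ≤ k - 1 := by
      have h6 : g i < g k := by rw [hi, hk]; exact hf (sub_one_lt _)
      have := hg.lt_iff_lt.mp h6; omega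
    have h3 : f j ≤ f (k + c - 1) := hf.monotone hj1
    have h4 : g i ≤ g (k - 1) := hg.monotone hi1
    have heq : g (k - 1) = f (k + c - 1) := by rw [hi] at h4; rw [hj] at h3; linarith
    rw [show k - 1 + c = k + c - 1 by ring]
    exact heq
  intro k
  induction k using Int.induction_on with
  | zero => rw [zero_add]; exact hc
  | succ n ih => exact step_up n ih
  | pred n ih => exact step_down (-(n : ℤ)) ih

/-- the distance list up to cyclic permutation is a complete invariant
of periodic sequences in `ℝ` up to translation. -/
theorem distance_list_complete_up_to_translation {m : ℕ} (S Q : PSeq m)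
    (hS : S.IsMinimal) (hQ : Q.IsMinimal) :
    (∃ t : ℝ, Q.pts = (fun x => x + t) '' S.pts) ↔
    ∃ s : ZMod m, ∀ i : ZMod m, Q.D i = S.D (i + s) := by
  letI : NeZero m := ⟨S.m_pos.ne'⟩
  constructor
  · rintro ⟨t, ht⟩
    set f : ℤ → ℝ := fun k => S.ext k + t with hf
    have hfm : StrictMono f := fun a b hab => by
      simp only [hf]; have := S.ext_strictMono hab; linarith
    have hrange : Set.range Q.ext = Set.range f := by
      rw [← Q.pts_eq_range, ht, S.pts_eq_range]
      ext x
      constructor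
      · rintro ⟨y, ⟨k, rfl⟩, rfl⟩; exact ⟨k, rfl⟩
      · rintro ⟨k, rfl⟩; exact ⟨S.ext k, ⟨k, rfl⟩, rfl⟩
    obtain ⟨c, hc⟩ : ∃ c, f c = Q.ext 0 := by
      rw [← Set.mem_range, ← hrange]; exact Set.mem_range_self _
    have key := strictMono_range_shift hfm Q.ext_strictMono hrange hc.symm
    refine ⟨((c : ℤ) : ZMod m), fun i => ?_⟩
    set k : ℤ := (i.val : ℤ) with hkdef
    have hicast : ((k : ZMod m)) = i := by
      rw [hkdef]; push_cast
      exact (ZMod.natCast_val i).trans (ZMod.cast_id _ _)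
    have e1 := Q.ext_succ k
    have e2 := S.ext_succ (k + c)
    have k1 := key k
    have k2 := key (k + 1)
    rw [show k + 1 + c = k + c + 1 by ring] at k2
    simp only [hf] at k1 k2
    have hmain : Q.D ((k : ZMod m)) = S.D (((k + c : ℤ) : ZMod m)) := by linarith
    rw [hicast] at hmain
    rw [hmain]
    congr 1
    push_cast
    rw [hicast]
  · rintro ⟨s, hs⟩
    set c : ℤ := (s.val : ℤ) with hcdef
    have hscast : ((c : ZMod m)) = s := by
      rw [hcdef]; push_cast
      exact (ZMod.natCast_val s).trans (ZMod.cast_id _ _)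
    refine ⟨Q.ext 0 - S.ext c, ?_⟩
    have key : ∀ k : ℤ, Q.ext k = S.ext (k + c) + (Q.ext 0 - S.ext c) := by
      intro k
      induction k using Int.induction_on with
      | zero => rw [zero_add]; ring
      | succ n ih =>
        have e1 := Q.ext_succ (n : ℤ)
        have e2 := S.ext_succ ((n : ℤ) + c)
        have hD : Q.D (((n : ℤ) : ZMod m)) = S.D ((((n : ℤ) + c : ℤ) : ZMod m)) := by
          rw [hs, show ((((n : ℤ) + c : ℤ)) : ZMod m) = ((n : ℤ) : ZMod m) + s by
            push_cast; rw [hscast]]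
        rw [show (n : ℤ) + 1 + c = (n : ℤ) + c + 1 by ring]
        linarith
      | pred n ih =>
        have e1 := Q.ext_succ (-(n : ℤ) - 1)
        have e2 := S.ext_succ (-(n : ℤ) - 1 + c)
        rw [show -(n : ℤ) - 1 + 1 = -(n : ℤ) by ring] at e1
        rw [show -(n : ℤ) - 1 + c + 1 = -(n : ℤ) + c by ring] at e2
        have hD : Q.D (((-(n : ℤ) - 1 : ℤ) : ZMod m))
            = S.D (((-(n : ℤ) - 1 + c : ℤ) : ZMod m)) := by
          rw [hs, show (((-(n : ℤ) - 1 + c : ℤ)) : ZMod m)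
            = ((-(n : ℤ) - 1 : ℤ) : ZMod m) + s by push_cast; rw [hscast]]
        linarith
    rw [Q.pts_eq_range, S.pts_eq_range]
    ext x
    constructor
    · rintro ⟨k, rfl⟩
      exact ⟨S.ext (k + c), ⟨k + c, rfl⟩, (key k).symm⟩
    · rintro ⟨y, ⟨j, rfl⟩, rfl⟩
      refine ⟨j - c, ?_⟩
      rw [key (j - c), show j - c + c = j by ring]
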